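/- Let n ≥ 1 and let a_0, …, a_n be real numbers. For a real number x̃ let u_k(x̃) be the Clenshaw sequence: u_{n+1}(x̃) = 0, u_n(x̃) = a_n, u_k(x̃) = 2x̃·u_{k+1}(x̃) − u_{k+2}(x̃) + a_k for 1 ≤ k ≤ n−1. Then for all real x and x̃, with γ = x̃ − x: p(x̃) − p(x) = 2γ·∑_{i=1}^n u_i(x̃)·T_{i−1}(x) − γ·u_1(x̃), where p(x) = ∑_{i=0}^n a_i T_i(x). (Elliott's backward-error identity for the Clenshaw algorithm.) -/
import Mathlib


open Polynomial Finset

/-- Elliott's backward-error identity for the Clenshaw algorithm: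
`p(x̃) − p(x) = 2γ·∑_{i=1}^n uᵢ(x̃)·T_{i−1}(x) − γ·u₁(x̃)` where `γ = x̃ − x`. -/
theorem elliott_identity (n : ℕ) (hn : 1 ≤ n) (a : ℕ → ℝ) (xt : ℝ) (u : ℕ → ℝ)
    (hun1 : u (n + 1) = 0) (hun : u n = a n)
    (hurec : ∀ k, 1 ≤ k → k ≤ n - 1 → u k = 2 * xt * u (k + 1) - u (k + 2) + a k) :
    ∀ x : ℝ,
      (∑ i ∈ Finset.range (n + 1), a i * (Polynomial.Chebyshev.T ℝ i).eval xt) -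
      (∑ i ∈ Finset.range (n + 1), a i * (Polynomial.Chebyshev.T ℝ i).eval x) =
      2 * (xt - x) * (∑ i ∈ Finset.Icc 1 n,
        u i * (Polynomial.Chebyshev.T ℝ ((i : ℤ) - 1)).eval x) - (xt - x) * u 1 := by
  -- modified coefficient sequence with v (n+2) = 0
  set v : ℕ → ℝ := fun k => if k = n + 2 then 0 else u k with hv
  have hv1 : ∀ k, k ≤ n + 1 → v k = u k := by
    intro k hk; simp only [hv]; rw [if_neg (by omega)]
  have hvn1 : v (n + 1) = 0 := by rw [hv1 _ le_rfl, hun1]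
  have hvn2 : v (n + 2) = 0 := by simp [hv]
  have ha : ∀ k, 1 ≤ k → k ≤ n → a k = v k - 2 * xt * v (k + 1) + v (k + 2) := by
    intro k hk1 hk2
    rcases eq_or_lt_of_le hk2 with rfl | hlt
    · rw [hv1 _ (by omega), hvn1, hvn2, hun]; ring
    · rw [hv1 _ (by omega), hv1 _ (by omega), hv1 _ (by omega),
        hurec k hk1 (by omega)]; ring
  -- the key telescoping identity, by downward induction
  have key : ∀ (x : ℝ) (j m : ℕ), 1 ≤ m → m + j = n →
      ∑ i ∈ Finset.Icc m n, a i * (Polynomial.Chebyshev.T ℝ i).eval x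
        = v m * (Polynomial.Chebyshev.T ℝ (m : ℤ)).eval x
          - v (m + 1) * (Polynomial.Chebyshev.T ℝ ((m : ℤ) - 1)).eval x
          - 2 * (xt - x) *
            ∑ i ∈ Finset.Icc m n, v (i + 1) * (Polynomial.Chebyshev.T ℝ (i : ℤ)).eval x := by
    intro x j
    induction j with
    | zero =>
      intro m hm1 hmn
      have hm : m = n := by omega
      subst hm
      rw [Finset.Icc_self, Finset.sum_singleton, Finset.sum_singleton, hvn1,
        hv1 m (by omega), hun]
      ring
    | succ j ih =>
      intro m hm1 hmn
      have hmn' : m + 1 + j = n := by omega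
      have hmle : m ≤ n := by omega
      have hsplit : ∀ f : ℕ → ℝ, ∑ i ∈ Finset.Icc m n, f i
          = f m + ∑ i ∈ Finset.Icc (m + 1) n, f i := by
        intro f
        rw [Finset.Icc_eq_cons_Ioc hmle, Finset.sum_cons, ← Finset.Icc_add_one_left_eq_Ioc]
      rw [hsplit, hsplit, ih (m + 1) (by omega) hmn', ha m hm1 hmle]
      have hT : (Polynomial.Chebyshev.T ℝ ((m : ℤ) + 1)).eval x
          = 2 * x * (Polynomial.Chebyshev.T ℝ (m : ℤ)).eval x
            - (Polynomial.Chebyshev.T ℝ ((m : ℤ) - 1)).eval x := by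
        have h2 := congrArg (Polynomial.eval x) (Polynomial.Chebyshev.T_add_one ℝ (m : ℤ))
        simpa using h2
      push_cast
      rw [show (m : ℤ) + 1 - 1 = (m : ℤ) from by ring, hT]
      ring
  intro x
  have h1 : ∀ y : ℝ, ∑ i ∈ Finset.range (n + 1), a i * (Polynomial.Chebyshev.T ℝ i).eval y
      = a 0 + ∑ i ∈ Finset.Icc 1 n, a i * (Polynomial.Chebyshev.T ℝ i).eval y := by
    intro y
    have hr : Finset.range (n + 1) = insert 0 (Finset.Icc 1 n) := by
      ext i; simp; omega
    rw [hr, Finset.sum_insert (by simp)]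
    simp [Polynomial.Chebyshev.T_zero]
  have hxt := key xt (n - 1) 1 le_rfl (by omega)
  have hx := key x (n - 1) 1 le_rfl (by omega)
  rw [h1 xt, h1 x, hxt, hx]
  -- relate the two sums on the RHS
  have hshift : ∑ i ∈ Finset.Icc 1 n, u i * (Polynomial.Chebyshev.T ℝ ((i : ℤ) - 1)).eval x
      = u 1 + ∑ i ∈ Finset.Icc 1 n, v (i + 1) * (Polynomial.Chebyshev.T ℝ (i : ℤ)).eval x := by
    have hA : ∑ i ∈ Finset.Icc 1 n, u i * (Polynomial.Chebyshev.T ℝ ((i : ℤ) - 1)).eval x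
        = u 1 + ∑ i ∈ Finset.Icc 2 n, u i * (Polynomial.Chebyshev.T ℝ ((i : ℤ) - 1)).eval x := by
      rw [Finset.Icc_eq_cons_Ioc hn, Finset.sum_cons, ← Finset.Icc_add_one_left_eq_Ioc]
      norm_num [Polynomial.Chebyshev.T_zero]
    have hB : ∑ i ∈ Finset.Icc 1 n, v (i + 1) * (Polynomial.Chebyshev.T ℝ (i : ℤ)).eval x
        = ∑ i ∈ Finset.Icc 2 n, u i * (Polynomial.Chebyshev.T ℝ ((i : ℤ) - 1)).eval x := by
      obtain ⟨p, rfl⟩ : ∃ p, n = p + 1 := ⟨n - 1, by omega⟩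
      rw [Finset.sum_Icc_succ_top (by omega), hvn1]
      have hmap : Finset.Icc 2 (p + 1)
          = Finset.map (addRightEmbedding 1) (Finset.Icc 1 p) := by
        rw [Finset.map_add_right_Icc]
      rw [hmap, Finset.sum_map]
      simp only [addRightEmbedding_apply]
      rw [zero_mul, add_zero]
      refine Finset.sum_congr rfl fun i hi => ?_
      simp only [Finset.mem_Icc] at hi
      rw [hv1 (i + 1) (by omega)]
      congr 1
      push_cast
      ring_nf
    rw [hA, hB]
  rw [hshift]
  simp only [Nat.cast_one, show ((1:ℤ) - 1) = 0 from rfl, Polynomial.Chebyshev.T_zero,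
    Polynomial.Chebyshev.T_one, Polynomial.eval_one, Polynomial.eval_X]
  rw [hv1 1 (by omega)]
  ring
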